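/- Let ζ, ζ' be jointly standard normal with correlation ρ, |ρ| ≤ c < 1. Then there are constants C(c) and t₀(c) such that for all t ≥ t₀(c), P(ζ ≥ t, ζ' ≥ t) ≤ C(c) t^{-2} exp(−t²/(1+c)). -/

import Mathlib

open MeasureTheory ProbabilityTheory Real Set

section BermanHelpers

open Filter

private lemma berman_pdfReal_le (x : ℝ) :
    gaussianPDFReal 0 1 x ≤ Real.exp (-(1/2) * (x - 0)^2) := by
  unfold gaussianPDFReal
  simp only [NNReal.coe_one, mul_one, sub_zero]
  have h1 : (Real.sqrt (2 * π))⁻¹ ≤ 1 := by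
    rw [inv_le_one_iff₀]
    right
    rw [Real.one_le_sqrt]
    nlinarith [Real.pi_gt_three]
  have h2 : -x ^ 2 / 2 = -(1/2) * x ^ 2 := by ring
  rw [h2]
  nlinarith [Real.exp_pos (-(1/2) * x ^ 2)]

private lemma berman_tail_exp {b a m : ℝ} (hb : 0 < b) (ham : 0 < a - m) :
    ∫ x in Ioi a, Real.exp (-b * (x - m)^2) ≤ Real.exp (-b * (a - m)^2) / (2 * b * (a - m)) := by
  have hint : IntegrableOn (fun x => (x - m) * Real.exp (-b * (x - m)^2)) (Ioi a) volume :=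
    ((integrable_mul_exp_neg_mul_sq hb).comp_sub_right m).integrableOn
  have hint0 : IntegrableOn (fun x => Real.exp (-b * (x - m)^2)) (Ioi a) volume :=
    ((integrable_exp_neg_mul_sq hb).comp_sub_right m).integrableOn
  have key : ∫ x in Ioi a, (x - m) * Real.exp (-b * (x - m)^2)
      = Real.exp (-b * (a - m)^2) / (2 * b) := by
    have hderiv : ∀ x ∈ Ici a, HasDerivAt (fun y => -Real.exp (-b * (y - m)^2) / (2 * b))
        ((x - m) * Real.exp (-b * (x - m)^2)) x := by
      intro x _
      have h1 : HasDerivAt (fun y : ℝ => -b * (y - m)^2) (-b * (2 * (x - m))) x := by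
        have := ((hasDerivAt_id x).sub_const m).pow 2
        simpa [mul_comm, mul_assoc, mul_left_comm] using this.const_mul (-b)
      have h2 := (h1.exp.neg).div_const (2 * b)
      refine h2.congr_deriv ?_
      field_simp
    have htend : Tendsto (fun y => -Real.exp (-b * (y - m)^2) / (2 * b)) atTop (nhds 0) := by
      have h1 : Tendsto (fun y : ℝ => -b * (y - m)^2) atTop atBot := by
        apply Tendsto.const_mul_atTop_of_neg (by linarith : -b < 0)
        exact (tendsto_pow_atTop (two_ne_zero)).comp
          (tendsto_atTop_add_const_right _ (-m) tendsto_id)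
      have := (Real.tendsto_exp_atBot.comp h1).neg.div_const (2 * b)
      simpa using this
    have := integral_Ioi_of_hasDerivAt_of_tendsto' hderiv hint htend
    rw [this]
    field_simp
    ring
  calc ∫ x in Ioi a, Real.exp (-b * (x - m)^2)
      ≤ ∫ x in Ioi a, ((x - m) / (a - m)) * Real.exp (-b * (x - m)^2) := by
        have hint2 : IntegrableOn (fun x => ((x - m) / (a - m)) * Real.exp (-b * (x - m)^2))
            (Ioi a) volume := by
          have := hint.div_const (a - m)
          apply this.congr
          filter_upwards with x
          ring
        apply setIntegral_mono_on hint0 hint2 measurableSet_Ioi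
        intro x hx
        rw [mem_Ioi] at hx
        have h1 : (1:ℝ) ≤ (x - m)/(a - m) := (one_le_div ham).mpr (by linarith)
        nlinarith [Real.exp_pos (-b * (x - m)^2), h1]
    _ = (a - m)⁻¹ * ∫ x in Ioi a, (x - m) * Real.exp (-b * (x - m)^2) := by
        rw [← integral_const_mul]; congr 1; ext x; ring
    _ ≤ Real.exp (-b * (a - m)^2) / (2 * b * (a - m)) := by
        rw [key]
        rw [inv_mul_eq_div, div_div]

private lemma berman_gauss_tail {u : ℝ} (hu : 0 < u) :
    gaussianReal 0 1 (Ici u) ≤ ENNReal.ofReal (Real.exp (-(1/2) * u^2) / u) := by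
  rw [gaussianReal_apply_eq_integral 0 one_ne_zero]
  apply ENNReal.ofReal_le_ofReal
  have h1 : ∫ x in Ici u, gaussianPDFReal 0 1 x = ∫ x in Ioi u, gaussianPDFReal 0 1 x :=
    integral_Ici_eq_integral_Ioi
  rw [h1]
  calc ∫ x in Ioi u, gaussianPDFReal 0 1 x
      ≤ ∫ x in Ioi u, Real.exp (-(1/2) * (x - 0)^2) := by
        apply setIntegral_mono_on (integrable_gaussianPDFReal 0 1).integrableOn
          ((integrable_exp_neg_mul_sq (by norm_num)).comp_sub_right 0).integrableOn
          measurableSet_Ioi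
        intro x _
        exact berman_pdfReal_le x
    _ ≤ Real.exp (-(1/2) * (u - 0)^2) / (2 * (1/2) * (u - 0)) :=
        berman_tail_exp (by norm_num) (by simpa)
    _ = Real.exp (-(1/2) * u^2) / u := by norm_num

end BermanHelpers

set_option maxHeartbeats 2000000 in
/-- (Berman's joint tail bound.) For `0 ≤ c < 1` there exist constants
`C(c) > 0` and `t₀(c) > 0` such that for every pair `(ζ, ζ')` of jointly standard normal
random variables with correlation `ρ`, `|ρ| ≤ c` (realized as `ζ' = ρ ζ + √(1−ρ²) ζ₂`
with `ζ, ζ₂` independent standard normals), and every `t ≥ t₀`,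
`P(ζ ≥ t, ζ' ≥ t) ≤ C t^{-2} exp(−t²/(1+c))`. -/
theorem stmt16 {Ω : Type*} [MeasurableSpace Ω] (μ : Measure Ω) [IsProbabilityMeasure μ]
    (c : ℝ) (hc0 : 0 ≤ c) (hc1 : c < 1) :
    ∃ C : ℝ, 0 < C ∧ ∃ t₀ : ℝ, 0 < t₀ ∧
      ∀ (ρ : ℝ), |ρ| ≤ c →
      ∀ (ζ ζ₂ : Ω → ℝ), Measurable ζ → Measurable ζ₂ →
        IndepFun ζ ζ₂ μ →
        Measure.map ζ μ = gaussianReal 0 1 →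
        Measure.map ζ₂ μ = gaussianReal 0 1 →
        ∀ (ζ' : Ω → ℝ), (∀ ω, ζ' ω = ρ * ζ ω + Real.sqrt (1 - ρ ^ 2) * ζ₂ ω) →
        ∀ t : ℝ, t₀ ≤ t →
          μ {ω | t ≤ ζ ω ∧ t ≤ ζ' ω}
            ≤ ENNReal.ofReal (C * t ^ (-2 : ℤ) * Real.exp (-t ^ 2 / (1 + c))) := by
  have hc1' : (0:ℝ) < 1 - c := by linarith
  have hδ : 0 < (3 - c)^2/8 - 1/(1+c) := by
    rw [sub_pos, div_lt_div_iff₀ (by linarith) (by norm_num)]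
    nlinarith [mul_pos hc1' (show (0:ℝ) < -c^2 + 4*c + 1 by nlinarith)]
  set δ : ℝ := (3 - c)^2/8 - 1/(1+c) with hδdef
  refine ⟨2/(1-c)^2 + 1/δ, by positivity, 1, one_pos, ?_⟩
  intro ρ hρ ζ ζ₂ hζ hζ₂ hindep hmapζ hmapζ₂ ζ' hζ' t ht
  set ε : ℝ := (1 - c)/2 with hε
  have hεpos : 0 < ε := by positivity
  have ht0 : (0:ℝ) < t := by linarith
  have hρ1 : ρ ≤ c := (abs_le.mp hρ).2
  have hρ2 : -c ≤ ρ := (abs_le.mp hρ).1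
  have hs2 : (0:ℝ) < 1 - ρ^2 := by nlinarith [sq_abs ρ, abs_nonneg ρ]
  set s := Real.sqrt (1 - ρ^2) with hsdef
  have hs0 : 0 < s := Real.sqrt_pos.mpr hs2
  have hssq : s^2 = 1 - ρ^2 := Real.sq_sqrt hs2.le
  have hs1 : s ≤ 1 := by
    nlinarith [hssq, hs0]
  set T := (1 + ε) * t with hT
  have htT : t ≤ T := by nlinarith
  have hTpos : 0 < T := lt_of_lt_of_le ht0 htT
  have htpow : (t:ℝ) ^ (-2 : ℤ) = (t^2)⁻¹ := by
    rw [zpow_neg, zpow_two, sq]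
  -- Step 1: transfer to the product Gaussian on ℝ².
  set γ : Measure ℝ := gaussianReal 0 1 with hγ
  set S : Set (ℝ × ℝ) := {p | t ≤ p.1 ∧ t ≤ ρ * p.1 + s * p.2} with hSdef
  have hSm : MeasurableSet S := by
    apply MeasurableSet.inter
    · exact measurableSet_le measurable_const measurable_fst
    · exact measurableSet_le measurable_const
        ((measurable_fst.const_mul ρ).add (measurable_snd.const_mul s))
  have hmap : μ.map (fun ω => (ζ ω, ζ₂ ω)) = γ.prod γ := by
    rw [(indepFun_iff_map_prod_eq_prod_map_map hζ.aemeasurable hζ₂.aemeasurable).mp hindep,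
      hmapζ, hmapζ₂]
  have hstep1 : μ {ω | t ≤ ζ ω ∧ t ≤ ζ' ω} = (γ.prod γ) S := by
    have hpre : {ω | t ≤ ζ ω ∧ t ≤ ζ' ω} = (fun ω => (ζ ω, ζ₂ ω)) ⁻¹' S := by
      ext ω
      simp only [hSdef, mem_setOf_eq, mem_preimage, hζ' ω]
    rw [hpre, ← hmap, Measure.map_apply (hζ.prodMk hζ₂) hSm]
  rw [hstep1]
  -- Step 2: split the event.
  set SA : Set (ℝ × ℝ) := {p | p.1 ∈ Icc t T ∧ (t - ρ * p.1)/s ≤ p.2} with hSAdef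
  set SB : Set (ℝ × ℝ) := Ici T ×ˢ (univ : Set ℝ) with hSBdef
  have hSAm : MeasurableSet SA := by
    apply MeasurableSet.inter
    · exact measurable_fst measurableSet_Icc
    · exact measurableSet_le ((measurable_const.sub (measurable_fst.const_mul ρ)).div_const s)
        measurable_snd
  have hsplit : S ⊆ SA ∪ SB := by
    rintro ⟨x, y⟩ ⟨h1, h2⟩
    simp only [mem_setOf_eq] at h1 h2
    by_cases hx : x ≤ T
    · left
      refine ⟨⟨h1, hx⟩, ?_⟩
      rw [div_le_iff₀ hs0]
      nlinarith
    · right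
      exact ⟨le_of_not_ge hx, mem_univ y⟩
  have hsub : (γ.prod γ) S ≤ (γ.prod γ) SA + (γ.prod γ) SB :=
    (measure_mono hsplit).trans (measure_union_le SA SB)
  -- Region B bound
  have hB : (γ.prod γ) SB ≤
      ENNReal.ofReal (1/δ * t ^ (-2 : ℤ) * Real.exp (-t ^ 2 / (1 + c))) := by
    rw [hSBdef, Measure.prod_prod, measure_univ, mul_one]
    refine (berman_gauss_tail hTpos).trans (ENNReal.ofReal_le_ofReal ?_)
    have hTexp : Real.exp (-(1/2) * T^2)
        = Real.exp (-t^2/(1+c)) * Real.exp (-(δ * t^2)) := by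
      rw [← Real.exp_add]
      congr 1
      rw [hδdef, hT, hε]
      field_simp
      ring
    have hexpδ : Real.exp (-(δ * t^2)) ≤ 1/(δ * t^2) := by
      rw [Real.exp_neg]
      rw [one_div]
      apply inv_anti₀ (by positivity)
      nlinarith [Real.add_one_le_exp (δ * t^2)]
    rw [hTexp, htpow]
    have h1T : 1/T ≤ 1/t := by
      apply div_le_div_of_nonneg_left one_pos.le ht0 htT
    have hfin : Real.exp (-t^2/(1+c)) * Real.exp (-(δ*t^2)) / T
        ≤ Real.exp (-t^2/(1+c)) * (1/(δ*t^2)) * (1/t) := by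
      rw [div_eq_mul_one_div _ T]
      have e1 : Real.exp (-t^2/(1+c)) * Real.exp (-(δ*t^2)) * (1/T)
          ≤ Real.exp (-t^2/(1+c)) * (1/(δ*t^2)) * (1/T) := by
        apply mul_le_mul_of_nonneg_right _ (by positivity)
        exact mul_le_mul_of_nonneg_left hexpδ (Real.exp_pos _).le
      refine e1.trans ?_
      apply mul_le_mul_of_nonneg_left h1T (by positivity)
    refine hfin.trans ?_
    have h1t : 1/t ≤ 1 := by
      rw [div_le_one ht0]; exact ht
    calc Real.exp (-t^2/(1+c)) * (1/(δ*t^2)) * (1/t)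
        ≤ Real.exp (-t^2/(1+c)) * (1/(δ*t^2)) * 1 := by
          apply mul_le_mul_of_nonneg_left h1t (by positivity)
      _ = 1/δ * (t^2)⁻¹ * Real.exp (-t^2/(1+c)) := by
          field_simp
  -- Region A bound
  set b : ℝ := 1/(2*s^2) with hb
  have hbpos : 0 < b := by positivity
  set K : ℝ := 2/((1-c)*t) with hK
  have hKpos : 0 < K := by positivity
  have hA : (γ.prod γ) SA ≤
      ENNReal.ofReal (2/(1-c)^2 * t ^ (-2 : ℤ) * Real.exp (-t ^ 2 / (1 + c))) := by
    have hprodA : (γ.prod γ) SA = ∫⁻ x in Icc t T, γ (Ici ((t - ρ * x)/s)) ∂γ := by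
      rw [Measure.prod_apply hSAm, ← lintegral_indicator measurableSet_Icc]
      congr 1
      funext x
      by_cases hx : x ∈ Icc t T
      · have h1 : Prod.mk x ⁻¹' SA = Ici ((t - ρ * x)/s) := by
          ext y
          simp only [hSAdef, mem_preimage, mem_setOf_eq, mem_Ici]
          exact ⟨fun h => h.2, fun h => ⟨hx, h⟩⟩
        rw [h1, indicator_of_mem hx]
      · have h1 : Prod.mk x ⁻¹' SA = ∅ :=
          eq_empty_iff_forall_notMem.mpr (fun y hy => hx hy.1)
        rw [h1, indicator_of_notMem hx]
        simp
    rw [hprodA]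
    have hw : ∀ x ∈ Icc t T, (1-c)/2 * t ≤ t - ρ * x := by
      intro x hx
      obtain ⟨hx1, hx2⟩ := hx
      have hρx : ρ * x ≤ c * T := by
        calc ρ * x ≤ |ρ * x| := le_abs_self _
          _ = |ρ| * |x| := abs_mul _ _
          _ ≤ c * T := by
              apply mul_le_mul hρ _ (abs_nonneg x) hc0
              rw [abs_of_nonneg (le_trans ht0.le hx1)]; exact hx2
      rw [hT, hε] at hρx
      nlinarith
    have hwpos : ∀ x ∈ Icc t T, 0 < t - ρ * x := fun x hx =>
      lt_of_lt_of_le (by positivity) (hw x hx)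
    have hmeas : Measurable fun x : ℝ => ENNReal.ofReal (K * Real.exp (-b * (t - ρ * x)^2)) := by
      apply Measurable.ennreal_ofReal
      fun_prop
    have hpt : ∀ x ∈ Icc t T, γ (Ici ((t - ρ * x)/s)) ≤
        ENNReal.ofReal (K * Real.exp (-b * (t - ρ * x)^2)) := by
      intro x hx
      have hu : 0 < (t - ρ * x)/s := div_pos (hwpos x hx) hs0
      refine (berman_gauss_tail hu).trans (ENNReal.ofReal_le_ofReal ?_)
      have he : -(1/2) * ((t - ρ * x)/s)^2 = -b * (t - ρ * x)^2 := by
        rw [hb]; field_simp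
      rw [he, div_eq_mul_one_div, mul_comm]
      apply mul_le_mul_of_nonneg_right _ (Real.exp_pos _).le
      rw [one_div_div]
      calc s/(t - ρ * x) ≤ 1/(t - ρ * x) := by
            gcongr
            exact (hwpos x hx).le
        _ ≤ K := by
            rw [hK]
            rw [div_le_div_iff₀ (hwpos x hx) (by positivity)]
            nlinarith [hw x hx]
    calc ∫⁻ x in Icc t T, γ (Ici ((t - ρ * x)/s)) ∂γ
        ≤ ∫⁻ x in Icc t T, ENNReal.ofReal (K * Real.exp (-b * (t - ρ * x)^2)) ∂γ :=
          setLIntegral_mono' measurableSet_Icc hpt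
      _ = ∫⁻ x in Icc t T, (gaussianPDF 0 1 *
            fun x => ENNReal.ofReal (K * Real.exp (-b * (t - ρ * x)^2))) x ∂volume := by
          rw [hγ, gaussianReal_of_var_ne_zero 0 one_ne_zero,
            setLIntegral_withDensity_eq_setLIntegral_mul volume (measurable_gaussianPDF 0 1)
              hmeas measurableSet_Icc]
      _ ≤ ∫⁻ x in Icc t T,
            ENNReal.ofReal (K * Real.exp (-t^2/2) * Real.exp (-b * (x - ρ*t)^2)) ∂volume := by
          apply setLIntegral_mono' measurableSet_Icc
          intro x _
          simp only [Pi.mul_apply, gaussianPDF]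
          rw [← ENNReal.ofReal_mul (gaussianPDFReal_nonneg 0 1 x)]
          apply ENNReal.ofReal_le_ofReal
          have hid : Real.exp (-(1/2) * (x - 0)^2) * Real.exp (-b * (t - ρ * x)^2)
              = Real.exp (-t^2/2) * Real.exp (-b * (x - ρ*t)^2) := by
            rw [← Real.exp_add, ← Real.exp_add]
            congr 1
            rw [hb, hssq]
            field_simp
            ring
          calc gaussianPDFReal 0 1 x * (K * Real.exp (-b * (t - ρ * x)^2))
              ≤ Real.exp (-(1/2) * (x - 0)^2) * (K * Real.exp (-b * (t - ρ * x)^2)) := by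
                apply mul_le_mul_of_nonneg_right (berman_pdfReal_le x) (by positivity)
            _ = K * (Real.exp (-(1/2) * (x - 0)^2) * Real.exp (-b * (t - ρ * x)^2)) := by ring
            _ = K * (Real.exp (-t^2/2) * Real.exp (-b * (x - ρ*t)^2)) := by rw [hid]
            _ = K * Real.exp (-t^2/2) * Real.exp (-b * (x - ρ*t)^2) := by ring
      _ ≤ ∫⁻ x in Ici t,
            ENNReal.ofReal (K * Real.exp (-t^2/2) * Real.exp (-b * (x - ρ*t)^2)) ∂volume :=
          lintegral_mono_set Icc_subset_Ici_self
      _ = ∫⁻ x in Ioi t,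
            ENNReal.ofReal (K * Real.exp (-t^2/2) * Real.exp (-b * (x - ρ*t)^2)) ∂volume :=
          (setLIntegral_congr Ioi_ae_eq_Ici).symm
      _ = ENNReal.ofReal (∫ x in Ioi t,
            K * Real.exp (-t^2/2) * Real.exp (-b * (x - ρ*t)^2)) := by
          rw [← ofReal_integral_eq_lintegral_ofReal]
          · exact (((integrable_exp_neg_mul_sq hbpos).comp_sub_right (ρ*t)).const_mul
              (K * Real.exp (-t^2/2))).integrableOn
          · exact ae_of_all _ fun x => by positivity
      _ ≤ ENNReal.ofReal (2/(1-c)^2 * t ^ (-2 : ℤ) * Real.exp (-t ^ 2 / (1 + c))) := by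
          apply ENNReal.ofReal_le_ofReal
          rw [integral_const_mul]
          have htail := berman_tail_exp hbpos (show 0 < t - ρ*t by nlinarith)
          have hexple : Real.exp (-t^2/2) * Real.exp (-b * (t - ρ*t)^2)
              ≤ Real.exp (-t^2/(1+c)) := by
            rw [← Real.exp_add]
            apply Real.exp_le_exp.mpr
            have hne1 : (0:ℝ) < 1 + ρ := by nlinarith
            have hne2 : (0:ℝ) < 1 - ρ := by nlinarith
            have heq : -t^2/2 + -b * (t - ρ*t)^2 = -t^2/(1+ρ) := by
              rw [hb, hssq]
              have h1 : (1:ℝ) - ρ^2 = (1-ρ)*(1+ρ) := by ring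
              rw [h1]
              field_simp
              ring
            rw [heq]
            rw [neg_div, neg_div, neg_le_neg_iff]
            gcongr

          have hfac3 : Real.exp (-b * (t - ρ*t)^2) / (2*b*(t - ρ*t))
              ≤ Real.exp (-b * (t - ρ*t)^2) * (1/((1-c)*t)) := by
            rw [div_eq_mul_one_div]
            apply mul_le_mul_of_nonneg_left _ (Real.exp_pos _).le
            apply one_div_le_one_div_of_le (by positivity)
            rw [hb]
            have hsle : s^2 ≤ 1 := by nlinarith
            have h2 : 2 * (1/(2*s^2)) * (t - ρ*t) = (t - ρ*t)/s^2 := by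
              field_simp
            rw [h2]
            rw [le_div_iff₀ (by positivity)]
            nlinarith [mul_nonneg (mul_nonneg (show (0:ℝ) ≤ 1-c by linarith) ht0.le)
                (show (0:ℝ) ≤ 1 - s^2 by nlinarith),
              mul_nonneg ht0.le (show (0:ℝ) ≤ c - ρ by linarith)]
          calc K * Real.exp (-t^2/2) * ∫ x in Ioi t, Real.exp (-b * (x - ρ*t)^2)
              ≤ K * Real.exp (-t^2/2) * (Real.exp (-b * (t - ρ*t)^2) / (2*b*(t - ρ*t))) := by
                apply mul_le_mul_of_nonneg_left htail (by positivity)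
            _ ≤ K * Real.exp (-t^2/2) * (Real.exp (-b * (t - ρ*t)^2) * (1/((1-c)*t))) := by
                apply mul_le_mul_of_nonneg_left hfac3 (by positivity)
            _ = K * (1/((1-c)*t)) * (Real.exp (-t^2/2) * Real.exp (-b * (t - ρ*t)^2)) := by
                ring
            _ ≤ K * (1/((1-c)*t)) * Real.exp (-t^2/(1+c)) := by
                apply mul_le_mul_of_nonneg_left hexple (by positivity)
            _ = 2/(1-c)^2 * t ^ (-2 : ℤ) * Real.exp (-t ^ 2 / (1 + c)) := by
                rw [htpow, hK]
                field_simp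
  -- assemble
  refine hsub.trans ?_
  refine (add_le_add hA hB).trans ?_
  rw [← ENNReal.ofReal_add (by positivity) (by positivity)]
  apply ENNReal.ofReal_le_ofReal
  exact le_of_eq (by ring)
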